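/- Let v₁, …, v₄ ∈ ℝ³ with det B_K > 0, let K = F_K(K̂), and let P, Q : ℝ³ → ℝ be continuously differentiable (in the application, pushed-forward polynomial basis functions P^K = P ∘ F_K^{−1}, Q^K = Q ∘ F_K^{−1}). Then for each ★ ∈ {x, y, z}, ∫_K P^K ∂_★ Q^K = Σ_{# ∈ {x,y,z}} a_{★#} ∫_{K̂} P ∂_{#} Q, where [a_{★#}] = det(B_K) B_K^{−⊤} and ∂_★ denotes the partial derivative in the ★ coordinate direction. -/

import Mathlib

open Matrix MeasureTheory

/-- `B_K`: the 3×3 matrix whose columns are `v₂ − v₁`, `v₃ − v₁`, `v₄ − v₁`. -/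
noncomputable def Bmat (v : Fin 4 → Fin 3 → ℝ) : Matrix (Fin 3) (Fin 3) ℝ :=
  Matrix.of fun i j => v j.succ i - v 0 i

/-- `F_K`: the affine map `x̂ ↦ B_K x̂ + v₁`. -/
noncomputable def FK (v : Fin 4 → Fin 3 → ℝ) (x : Fin 3 → ℝ) : Fin 3 → ℝ :=
  (Bmat v).mulVec x + v 0

/-- The reference tetrahedron `K̂ = {(x,y,z) : x, y, z ≥ 0, x + y + z ≤ 1}`. -/
def refTet : Set (Fin 3 → ℝ) :=
  {x | 0 ≤ x 0 ∧ 0 ≤ x 1 ∧ 0 ≤ x 2 ∧ x 0 + x 1 + x 2 ≤ 1}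

lemma refTet_isClosed : IsClosed refTet := by
  have : refTet = {x : Fin 3 → ℝ | 0 ≤ x 0} ∩ {x | 0 ≤ x 1} ∩ {x | 0 ≤ x 2} ∩
      {x | x 0 + x 1 + x 2 ≤ 1} := by
    ext x; simp [refTet, Set.mem_inter_iff, and_assoc]
  rw [this]
  refine (((isClosed_le continuous_const (continuous_apply 0)).inter
    (isClosed_le continuous_const (continuous_apply 1))).inter
    (isClosed_le continuous_const (continuous_apply 2))).inter
    (isClosed_le (by continuity) continuous_const)

lemma refTet_isCompact : IsCompact refTet := by
  refine IsCompact.of_isClosed_subset (isCompact_Icc (a := (0 : Fin 3 → ℝ)) (b := 1))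
    refTet_isClosed ?_
  rintro x ⟨h0, h1, h2, hs⟩
  constructor
  · intro i; fin_cases i <;> assumption
  · intro i
    fin_cases i
    · show x 0 ≤ 1; linarith
    · show x 1 ≤ 1; linarith
    · show x 2 ≤ 1; linarith

/-- For pushed-forward functions `P^K ∘ F_K = P`, `Q^K ∘ F_K = Q` (all continuously
differentiable) on the tetrahedron `K = F_K(K̂)` with `det B_K > 0`, one has, for each
coordinate direction `★`, `∫_K P^K ∂_★ Q^K = Σ_{#} a_{★#} ∫_{K̂} P ∂_# Q`, where
`[a_{★#}] = det(B_K) B_K^{−⊤}`. -/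
theorem convection_matrix_change_of_variables (v : Fin 4 → Fin 3 → ℝ)
    (hdet : 0 < (Bmat v).det)
    (P Q PK QK : (Fin 3 → ℝ) → ℝ)
    (hP : ContDiff ℝ 1 P) (hQ : ContDiff ℝ 1 Q)
    (hPK : ContDiff ℝ 1 PK) (hQK : ContDiff ℝ 1 QK)
    (hcompP : ∀ x, PK (FK v x) = P x) (hcompQ : ∀ x, QK (FK v x) = Q x) :
    ∀ st : Fin 3,
      ∫ x in FK v '' refTet, PK x * fderiv ℝ QK x (Pi.single st 1) =
        ∑ j : Fin 3, ((Bmat v).det • ((Bmat v)⁻¹)ᵀ) st j *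
          ∫ y in refTet, P y * fderiv ℝ Q y (Pi.single j 1) := by
  intro st
  set B := Bmat v with hB
  have hdet' : B.det ≠ 0 := ne_of_gt hdet
  set L : (Fin 3 → ℝ) →L[ℝ] (Fin 3 → ℝ) :=
    LinearMap.toContinuousLinearMap (Matrix.toLin' B) with hLdef
  have hLapp : ∀ x, L x = B.mulVec x := fun x => by
    simp [hLdef, Matrix.toLin'_apply]
  have hFK : ∀ x, FK v x = L x + v 0 := fun x => by simp [FK, hLapp, hB]
  have hderiv : ∀ x : Fin 3 → ℝ, HasFDerivAt (FK v) L x := by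
    intro x
    have h : HasFDerivAt (fun y => L y + v 0) L x := L.hasFDerivAt.add_const _
    exact h.congr_of_eventuallyEq (Filter.Eventually.of_forall fun y => hFK y)
  -- injectivity
  have hinj : Set.InjOn (FK v) refTet := by
    intro a _ b _ hab
    have : B.mulVec a = B.mulVec b := by
      have := hab
      simp only [FK] at this
      exact add_right_cancel this
    have h2 : (B⁻¹).mulVec (B.mulVec a) = (B⁻¹).mulVec (B.mulVec b) := by rw [this]
    rwa [Matrix.mulVec_mulVec, Matrix.mulVec_mulVec, Matrix.nonsing_inv_mul B (isUnit_iff_ne_zero.mpr hdet'),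
      Matrix.one_mulVec, Matrix.one_mulVec] at h2
  have hmeas : MeasurableSet refTet := refTet_isClosed.measurableSet
  -- change of variables
  have hcov := integral_image_eq_integral_abs_det_fderiv_smul (μ := volume) hmeas
    (f' := fun _ => L) (fun x _ => (hderiv x).hasFDerivWithinAt) hinj
    (fun x => PK x * fderiv ℝ QK x (Pi.single st 1))
  rw [hcov]
  have hLdet : L.det = B.det := by
    simp only [hLdef, ContinuousLinearMap.det]
    rw [LinearMap.coe_toContinuousLinearMap]
    exact LinearMap.det_toLin' B
  -- chain rule
  have hQKdiff : ∀ y, DifferentiableAt ℝ QK y := fun y =>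
    (hQK.differentiable one_ne_zero).differentiableAt
  have hchain : ∀ x, ∀ w, fderiv ℝ Q x w = fderiv ℝ QK (FK v x) (L w) := by
    intro x w
    have hQeq : Q = QK ∘ FK v := by funext y; simp [hcompQ y]
    rw [hQeq, fderiv_comp x (hQKdiff _) (hderiv x).differentiableAt,
      (hderiv x).fderiv]
    rfl
  have hkey : ∀ x, fderiv ℝ QK (FK v x) (Pi.single st 1) =
      ∑ j : Fin 3, (B⁻¹ j st) * fderiv ℝ Q x (Pi.single j 1) := by
    intro x
    have hsingle : Pi.single st (1 : ℝ) = L ((B⁻¹).mulVec (Pi.single st 1)) := by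
      rw [hLapp, Matrix.mulVec_mulVec, Matrix.mul_nonsing_inv B (isUnit_iff_ne_zero.mpr hdet'),
        Matrix.one_mulVec]
    calc fderiv ℝ QK (FK v x) (Pi.single st 1)
        = fderiv ℝ QK (FK v x) (L ((B⁻¹).mulVec (Pi.single st 1))) := by rw [← hsingle]
      _ = fderiv ℝ Q x ((B⁻¹).mulVec (Pi.single st 1)) := (hchain x _).symm
      _ = ∑ j : Fin 3, (B⁻¹ j st) * fderiv ℝ Q x (Pi.single j 1) := by
          have hv : (B⁻¹).mulVec (Pi.single st 1) =
              ∑ j : Fin 3, (B⁻¹ j st) • (Pi.single j (1 : ℝ) : Fin 3 → ℝ) := by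
            funext i
            simp [Matrix.mulVec, dotProduct, Pi.single_apply, Finset.sum_apply,
              mul_ite, mul_one, mul_zero, eq_comm]
          rw [hv, map_sum]
          refine Finset.sum_congr rfl fun j _ => ?_
          rw [ContinuousLinearMap.map_smul, smul_eq_mul]
  -- integrability of each summand
  have hQfc : Continuous fun y => fderiv ℝ Q y := hQ.continuous_fderiv one_ne_zero
  have hint : ∀ j : Fin 3, IntegrableOn
      (fun y => (B.det * B⁻¹ j st) * (P y * fderiv ℝ Q y (Pi.single j 1))) refTet := by
    intro j
    refine (ContinuousOn.integrableOn_compact refTet_isCompact ?_)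
    exact (continuous_const.mul (hP.continuous.mul
      (hQfc.clm_apply continuous_const))).continuousOn
  have hrw : ∀ x ∈ refTet, |L.det| • (PK (FK v x) * fderiv ℝ QK (FK v x) (Pi.single st 1)) =
      ∑ j : Fin 3, (B.det * B⁻¹ j st) * (P x * fderiv ℝ Q x (Pi.single j 1)) := by
    intro x _
    rw [hLdet, abs_of_pos hdet, hcompP x, hkey x, smul_eq_mul]
    simp only [Finset.mul_sum]
    exact Finset.sum_congr rfl fun j _ => by ring
  rw [setIntegral_congr_fun hmeas hrw, integral_finset_sum _ fun j _ => hint j]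
  refine Finset.sum_congr rfl fun j _ => ?_
  rw [MeasureTheory.integral_const_mul]
  simp [Matrix.smul_apply, Matrix.transpose_apply, smul_eq_mul, hB]
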